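/- arXiv:1607.08806 — 4 statements merged into one kernel-verified Lean document; each statement's English description precedes it below -/
import Mathlib

section
/- The subgraph of the n-dimensional hypercube induced by levels k through l has equal bipartition classes (i.e., δ(Q_{n,[k,l]}) = 0) if and only if n is odd and l = n − k, or n is even and [k,l] = [0,n]. -/
/-- The weight of a bitstring of length `n`: the number of ones. -/
def wtF {n : ℕ} (x : Fin n → Bool) : ℕ := (Finset.univ.filter (fun i => x i = true)).card

open Finset

lemma card_wt (n w : ℕ) :
    (Finset.univ.filter (fun x : Fin n → Bool => wtF x = w)).card = n.choose w := by
  have hc : (Finset.powersetCard w (Finset.univ : Finset (Fin n))).card = n.choose w := by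
    simp [Finset.card_powersetCard]
  rw [← hc]
  apply Finset.card_bij (fun x _ => Finset.univ.filter (fun i => x i = true))
  · intro x hx
    simp only [mem_filter, mem_univ, true_and] at hx
    simp only [Finset.mem_powersetCard]
    exact ⟨Finset.filter_subset _ _, hx⟩
  · intro x hx y hy h
    funext i
    have := Finset.ext_iff.1 h i
    simp only [mem_filter, mem_univ, true_and] at this
    by_cases hxi : x i = true <;> by_cases hyi : y i = true <;> simp_all
  · intro s hs
    refine ⟨fun i => decide (i ∈ s), ?_, ?_⟩
    · rw [Finset.mem_filter]
      simp only [mem_filter, mem_univ, true_and, wtF]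
      rw [Finset.mem_powersetCard] at hs
      rw [← hs.2]
      congr 1
      ext i; simp
    · ext i; simp

lemma card_filter_wt (n k l : ℕ) (P : ℕ → Prop) [DecidablePred P] :
    (Finset.univ.filter
        (fun x : Fin n → Bool => (k ≤ wtF x ∧ wtF x ≤ l) ∧ P (wtF x))).card =
      ∑ w ∈ (Finset.Icc k l).filter P, n.choose w := by
  rw [Finset.card_eq_sum_card_fiberwise
    (f := wtF) (t := (Finset.Icc k l).filter P)
    (fun x hx => by
      simp only [mem_coe, mem_filter, mem_univ, true_and] at hx ⊢
      exact ⟨Finset.mem_Icc.2 hx.1, hx.2⟩)]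
  refine Finset.sum_congr rfl fun w hw => ?_
  rw [← card_wt n w]
  congr 1
  ext x
  simp only [mem_filter, mem_univ, true_and, Finset.mem_Icc] at hw ⊢
  constructor
  · rintro ⟨-, h⟩; exact h
  · rintro rfl; exact ⟨⟨hw.1, hw.2⟩, rfl⟩

lemma altsum (m : ℕ) : ∀ l : ℕ,
    ∑ i ∈ Finset.range (l + 1), (-1 : ℤ) ^ i * ((m + 1).choose i) =
      (-1) ^ l * (m.choose l)
  | 0 => by simp
  | l + 1 => by
    rw [Finset.sum_range_succ, altsum m l, Nat.choose_succ_succ]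
    push_cast
    ring

lemma choose_strict (m : ℕ) : ∀ b a : ℕ, a < b → 2 * b ≤ m →
    Nat.choose m a < Nat.choose m b := by
  intro b
  induction b with
  | zero => omega
  | succ c ih =>
    intro a hab hb
    have step : Nat.choose m c < Nat.choose m (c + 1) := by
      have h1 := Nat.choose_succ_right_eq m c
      have hc1 : 0 < Nat.choose m c := Nat.choose_pos (by omega)
      have h2 : c + 2 ≤ m - c := by omega
      nlinarith [Nat.choose_pos (show c + 1 ≤ m by omega)]
    rcases Nat.lt_or_ge a c with h | h
    · exact (ih a h (by omega)).trans step
    · have : a = c := by omega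
      subst this; exact step

lemma choose_inj (m a b : ℕ) (hab : a < b) (hb : b ≤ m)
    (h : Nat.choose m a = Nat.choose m b) : a + b = m := by
  by_contra hne
  rcases Nat.lt_or_ge (a + b) m with hlt | hge
  · rcases le_or_gt (2 * b) m with h2 | h2
    · exact absurd h (Nat.ne_of_lt (choose_strict m b a hab h2))
    · have hsym : Nat.choose m (m - b) = Nat.choose m b := Nat.choose_symm hb
      have : Nat.choose m a < Nat.choose m (m - b) :=
        choose_strict m (m - b) a (by omega) (by omega)
      omega
  · have hgt : m < a + b := by omega
    have ha : a ≤ m := by omega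
    have hsym : Nat.choose m (m - b) = Nat.choose m b := Nat.choose_symm hb
    rcases le_or_gt (2 * a) m with h2 | h2
    · have : Nat.choose m (m - b) < Nat.choose m a :=
        choose_strict m a (m - b) (by omega) h2
      omega
    · have hsyma : Nat.choose m (m - a) = Nat.choose m a := Nat.choose_symm ha
      have : Nat.choose m (m - b) < Nat.choose m (m - a) :=
        choose_strict m (m - a) (m - b) (by omega) (by omega)
      omega

/-- `Q_{n,[k,l]}` has equal bipartition classes (given by parity of weight) iff
`n` is odd and `l = n - k`, or `n` is even and `[k,l] = [0,n]`. -/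
theorem stmt2 (n k l : ℕ) (hn : 1 ≤ n) (hkl : k ≤ l) (hl : l ≤ n) :
    ((Finset.univ.filter
        (fun x : Fin n → Bool => (k ≤ wtF x ∧ wtF x ≤ l) ∧ Even (wtF x))).card =
     (Finset.univ.filter
        (fun x : Fin n → Bool => (k ≤ wtF x ∧ wtF x ≤ l) ∧ ¬ Even (wtF x))).card)
    ↔ ((Odd n ∧ l = n - k) ∨ (Even n ∧ k = 0 ∧ l = n)) := by
  obtain ⟨m, rfl⟩ : ∃ m, n = m + 1 := ⟨n - 1, by omega⟩
  set n := m + 1 with hn'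
  rw [card_filter_wt n k l Even, card_filter_wt n k l (fun w => ¬ Even w)]
  -- turn card equality into an alternating sum being zero
  have key : ((∑ w ∈ (Finset.Icc k l).filter Even, n.choose w) =
      (∑ w ∈ (Finset.Icc k l).filter (fun w => ¬ Even w), n.choose w)) ↔
      (∑ i ∈ Finset.Icc k l, (-1 : ℤ) ^ i * (n.choose i)) = 0 := by
    have hsplit := Finset.sum_filter_add_sum_filter_not (Finset.Icc k l) Even
      (fun i => (-1 : ℤ) ^ i * (n.choose i))
    have he : ∑ i ∈ (Finset.Icc k l).filter Even, (-1 : ℤ) ^ i * (n.choose i) =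
        ∑ w ∈ (Finset.Icc k l).filter Even, ((n.choose w : ℤ)) := by
      refine Finset.sum_congr rfl fun i hi => ?_
      rw [(Even.neg_one_pow (Finset.mem_filter.1 hi).2), one_mul]
    have ho : ∑ i ∈ (Finset.Icc k l).filter (fun w => ¬ Even w), (-1 : ℤ) ^ i * (n.choose i) =
        ∑ w ∈ (Finset.Icc k l).filter (fun w => ¬ Even w), (-(n.choose w : ℤ)) := by
      refine Finset.sum_congr rfl fun i hi => ?_
      rw [(Odd.neg_one_pow (Nat.not_even_iff_odd.1 (Finset.mem_filter.1 hi).2)), neg_one_mul]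
    rw [he, ho, Finset.sum_neg_distrib] at hsplit
    constructor
    · intro h
      rw [← hsplit]
      have h' := congrArg (Nat.cast : ℕ → ℤ) h
      push_cast at h'
      linarith
    · intro h
      rw [← hsplit] at h
      have : ((∑ w ∈ (Finset.Icc k l).filter Even, n.choose w : ℕ) : ℤ) =
          ((∑ w ∈ (Finset.Icc k l).filter (fun w => ¬ Even w), n.choose w : ℕ) : ℤ) := by
        push_cast
        linarith
      exact_mod_cast this
  rw [key]
  -- evaluate the alternating sum
  have hIcc : (Finset.Icc k l) = Finset.Ico k (l + 1) := by
    ext i; simp [Nat.lt_succ_iff]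
  rw [hIcc, Finset.sum_Ico_eq_sub _ (by omega : k ≤ l + 1), altsum m l]
  rcases Nat.eq_zero_or_pos k with rfl | hk
  · simp only [Finset.range_zero, Finset.sum_empty, sub_zero]
    have hml : ((-1 : ℤ) ^ l * (m.choose l)) = 0 ↔ (m.choose l : ℤ) = 0 := by
      constructor
      · intro h
        rcases mul_eq_zero.1 h with h' | h'
        · exact absurd h' (pow_ne_zero _ (by norm_num))
        · exact h'
      · intro h; rw [h, mul_zero]
    rw [hml]
    have : (m.choose l : ℤ) = 0 ↔ m.choose l = 0 := by exact_mod_cast Iff.rfl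
    rw [this, Nat.choose_eq_zero_iff]
    constructor
    · intro h
      have hln : l = n := by omega
      rcases Nat.even_or_odd n with he | ho
      · exact Or.inr ⟨he, by trivial, hln⟩
      · exact Or.inl ⟨ho, by omega⟩
    · rintro (⟨-, h⟩ | ⟨-, -, h⟩) <;> omega
  · obtain ⟨j, rfl⟩ : ∃ j, k = j + 1 := ⟨k - 1, by omega⟩
    rw [altsum m j]
    have hjm : j ≤ m := by omega
    have hnk : n - (j + 1) = m - j := by omega
    constructor
    · intro h
      have heq : (-1 : ℤ) ^ l * (m.choose l) = (-1) ^ j * (m.choose j) := by linarith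
      have hcj : 0 < m.choose j := Nat.choose_pos hjm
      -- l ≤ m, else LHS zero but RHS nonzero
      have hlm : l ≤ m := by
        by_contra hc
        have : m.choose l = 0 := Nat.choose_eq_zero_of_lt (by omega)
        rw [this] at heq
        simp only [Nat.cast_zero, mul_zero] at heq
        have : ((m.choose j : ℤ)) ≠ 0 := by exact_mod_cast hcj.ne'
        rcases mul_eq_zero.1 heq.symm with h' | h'
        · exact absurd h' (pow_ne_zero _ (by norm_num))
        · exact this h'
      -- compare absolute values
      have habs : (m.choose l : ℤ) = (m.choose j : ℤ) := by
        have := congrArg (|·|) heq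
        simpa [abs_mul, abs_pow] using this
      have hch : m.choose l = m.choose j := by exact_mod_cast habs
      have hjl : j < l := by omega
      have hsum : j + l = m := by
        have := choose_inj m j l hjl hlm hch.symm
        omega
      -- parity: (-1)^l = (-1)^j
      have hsign : ((-1 : ℤ) ^ l) = (-1) ^ j := by
        rw [habs] at heq
        have : ((m.choose j : ℤ)) ≠ 0 := by exact_mod_cast hcj.ne'
        exact mul_right_cancel₀ this heq
      have hpar : Even (l + j) := by
        have : ((-1 : ℤ) ^ (l + j)) = 1 := by
          rw [pow_add, hsign, ← pow_add, ← two_mul]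
          exact Even.neg_one_pow ⟨j, two_mul j⟩
        exact (neg_one_pow_eq_one_iff_even (by norm_num)).1 this
      have hnodd : Odd n := by
        have hme : Even m := by
          rw [← hsum, Nat.add_comm]
          exact hpar
        exact hme.add_one
      exact Or.inl ⟨hnodd, by omega⟩
    · rintro (⟨hodd, hl'⟩ | ⟨-, h0, -⟩)
      · have hmeven : Even m := by
          rcases hodd with ⟨t, ht⟩
          exact ⟨t, by omega⟩
        have hlval : l = m - j := by omega
        subst hlval
        have hch : m.choose (m - j) = m.choose j := Nat.choose_symm hjm
        have hsign : ((-1 : ℤ) ^ (m - j)) = (-1) ^ j := by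
          have h1 : ((-1 : ℤ) ^ (m - j)) * ((-1) ^ j) = 1 := by
            rw [← pow_add, show m - j + j = m by omega]
            exact Even.neg_one_pow hmeven
          have h3 : ((-1 : ℤ) ^ j) * ((-1) ^ j) = 1 := by
            rw [← pow_add, ← two_mul]; exact Even.neg_one_pow ⟨j, two_mul j⟩
          calc ((-1:ℤ)^(m-j)) = ((-1)^(m-j) * ((-1)^j * (-1)^j)) := by rw [h3, mul_one]
          _ = ((-1)^(m-j) * (-1)^j) * (-1)^j := by ring
          _ = (-1)^j := by rw [h1, one_mul]
        rw [hch, hsign]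
        ring
      · omega
end

section
/- For n ≥ 2 and 0 < k < n, any two cyclically consecutive bitstrings in Γ_{n,k} (the subsequence of the reflected Gray code Γ_n consisting of all weight-k bitstrings) differ in exactly two positions. -/
/-- The reflected Gray code `Γ_n`. -/
def gray : ℕ → List (List Bool)
  | 0 => [[]]
  | n + 1 => (gray n).map (fun x => x ++ [false]) ++ ((gray n).reverse.map (fun x => x ++ [true]))

/-- `Γ_{n,k}`: the subsequence of `Γ_n` consisting of the bitstrings of weight `k`. -/
def grayLevel (n k : ℕ) : List (List Bool) := (gray n).filter (fun x => x.count true = k)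

/-- Hamming distance of two bitstrings (of the same length). -/
def hamming (x y : List Bool) : ℕ := ((x.zip y).filter (fun p => p.1 ≠ p.2)).length

lemma hamming_append {x1 y1 : List Bool} (x2 y2 : List Bool) (h : x1.length = y1.length) :
    hamming (x1 ++ x2) (y1 ++ y2) = hamming x1 y1 + hamming x2 y2 := by
  unfold hamming
  rw [List.zip_append h, List.filter_append, List.length_append]

lemma hamming_self (x : List Bool) : hamming x x = 0 := by
  induction x with
  | nil => rfl
  | cons a x ih => simpa [hamming, List.zip_cons_cons] using ih

lemma hamming_comm (x y : List Bool) : hamming x y = hamming y x := by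
  unfold hamming
  rw [← List.zip_swap y x, List.filter_map, List.length_map]
  congr 1
  apply List.filter_congr
  intro p _
  rcases p with ⟨a, b⟩
  simp only [Prod.swap_prod_mk, Function.comp_apply, decide_eq_decide]
  exact ne_comm

lemma hamming_single (a b : Bool) : hamming [a] [b] = if a = b then 0 else 1 := by
  cases a <;> cases b <;> rfl

lemma length_of_mem_gray : ∀ n x, x ∈ gray n → x.length = n := by
  intro n
  induction n with
  | zero => intro x hx; simp [gray] at hx; simp [hx]
  | succ n ih =>
    intro x hx
    simp only [gray, List.mem_append, List.mem_map, List.mem_reverse] at hx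
    rcases hx with ⟨y, hy, rfl⟩ | ⟨y, hy, rfl⟩ <;>
      simp [List.length_append, ih y hy]

lemma gray_succ (n : ℕ) : gray (n+1) = (gray n).map (fun x => x ++ [false]) ++ ((gray n).reverse.map (fun x => x ++ [true])) := rfl

lemma grayLevel_succ_succ (n k : ℕ) :
    grayLevel (n+1) (k+1) = ((grayLevel n (k+1)).map (fun x => x ++ [false])) ++
      ((grayLevel n k).reverse.map (fun x => x ++ [true])) := by
  simp only [grayLevel, gray_succ]
  rw [List.filter_append, List.filter_map, List.filter_map, List.filter_reverse]
  congr 2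
  · apply List.filter_congr; intro x _; simp [List.count_append]
  · congr 1; apply List.filter_congr; intro x _; simp [List.count_append]

lemma grayLevel_succ_zero (n : ℕ) :
    grayLevel (n+1) 0 = (grayLevel n 0).map (fun x => x ++ [false]) := by
  simp only [grayLevel, gray_succ]
  rw [List.filter_append, List.filter_map, List.filter_map, List.filter_reverse]
  have h2 : List.filter ((fun x => decide (x.count true = 0)) ∘ (fun x => x ++ [true])) (gray n) = [] := by
    rw [List.filter_eq_nil_iff]
    intro x _
    simp [List.count_append]
  rw [h2]
  simp only [List.reverse_nil, List.map_nil, List.append_nil]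
  congr 1
  apply List.filter_congr
  intro x _
  simp [List.count_append]

lemma grayLevel_eq_nil {n k : ℕ} (h : n < k) : grayLevel n k = [] := by
  rw [grayLevel, List.filter_eq_nil_iff]
  intro x hx
  have h1 : x.count true ≤ x.length := List.count_le_length
  rw [length_of_mem_gray n x hx] at h1
  simp only [decide_eq_true_eq]
  omega

def fb (k m : ℕ) : List Bool := List.replicate k true ++ List.replicate m false
def lb (k m : ℕ) : List Bool := List.replicate k true ++ List.replicate m false ++ [true]

lemma fb_false (k m : ℕ) : fb k m ++ [false] = fb k (m+1) := by
  simp [fb, List.replicate_succ', List.append_assoc]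

lemma gl_ends : ∀ n : ℕ,
    (∀ k, k ≤ n → (grayLevel n k).head? = some (fb k (n-k))) ∧
    (grayLevel n 0).getLast? = some (List.replicate n false) ∧
    (∀ k, k + 1 ≤ n → (grayLevel n (k+1)).getLast? = some (lb k (n-k-1))) := by
  intro n
  induction n with
  | zero =>
    refine ⟨fun k hk => ?_, by simp [grayLevel, gray], fun k hk => by omega⟩
    interval_cases k
    simp [grayLevel, gray, fb]
  | succ n ih =>
    obtain ⟨ihH, ihL0, ihLS⟩ := ih
    have hne : ∀ k, k ≤ n → grayLevel n k ≠ [] := by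
      intro k hk h
      have := ihH k hk
      rw [h] at this
      simp at this
    refine ⟨fun k hk => ?_, ?_, fun k hk => ?_⟩
    · match k, hk with
      | 0, _ =>
        rw [grayLevel_succ_zero, List.head?_map, ihH 0 (Nat.zero_le n)]
        simp [fb_false]
      | k+1, hk =>
        rw [grayLevel_succ_succ, List.head?_append]
        rcases Nat.lt_or_ge k n with h | h
        · -- k+1 ≤ n, left part nonempty
          rw [List.head?_map, ihH (k+1) h]
          have : n + 1 - (k+1) = (n - (k+1)) + 1 := by omega
          simp [fb_false, this]
        · -- k = n
          have hk' : n = k := by omega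
          subst hk'
          rw [grayLevel_eq_nil (Nat.lt_succ_self _), List.map_nil]
          simp only [List.head?_nil, Option.none_or, List.head?_map, List.head?_reverse]
          cases n with
          | zero => rw [ihL0]; simp [fb]
          | succ m =>
            rw [ihLS m (by omega)]
            simp [fb, lb, List.replicate_succ', Nat.sub_self, List.append_assoc]
    · rw [grayLevel_succ_zero, List.getLast?_map, ihL0]
      simp [List.replicate_succ']
    · rw [grayLevel_succ_succ]
      have hB : (grayLevel n k).reverse.map (fun x => x ++ [true]) ≠ [] := by
        simp only [ne_eq, List.map_eq_nil_iff, List.reverse_eq_nil_iff]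
        exact hne k (by omega)
      rw [List.getLast?_append_of_ne_nil _ hB, List.getLast?_map, List.getLast?_reverse,
        ihH k (by omega)]
      simp only [Option.map_some, Option.some.injEq]
      have : n + 1 - k - 1 = n - k := by omega
      rw [this]
      simp [fb, lb, List.append_assoc]

lemma length_fb (k m : ℕ) : (fb k m).length = k + m := by simp [fb]
lemma length_lb (k m : ℕ) : (lb k m).length = k + m + 1 := by simp [lb]; omega

lemma hamming_snoc_same (x y : List Bool) (a : Bool) (h : x.length = y.length) :
    hamming (x ++ [a]) (y ++ [a]) = hamming x y := by
  rw [hamming_append _ _ h, hamming_self, Nat.add_zero]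

lemma junction1 (m : ℕ) :
    hamming (lb 0 m ++ [false]) (List.replicate (m+1) false ++ [true]) = 2 := by
  have h1 : lb 0 m ++ [false] = List.replicate m false ++ [true, false] := by
    simp [lb, List.append_assoc]
  have h2 : List.replicate (m+1) false ++ [true] = List.replicate m false ++ [false, true] := by
    simp [List.replicate_succ', List.append_assoc]
  rw [h1, h2, hamming_append _ _ (by simp), hamming_self]
  decide

lemma junction2 (k m : ℕ) :
    hamming (lb (k+1) m ++ [false]) (lb k (m+1) ++ [true]) = 2 := by
  have h1 : lb (k+1) m ++ [false] =
      List.replicate k true ++ ([true] ++ (List.replicate m false ++ [true, false])) := by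
    simp [lb, List.replicate_succ', List.append_assoc]
  have h2 : lb k (m+1) ++ [true] =
      List.replicate k true ++ ([false] ++ (List.replicate m false ++ [true, true])) := by
    simp [lb, List.replicate_succ, List.append_assoc]
  rw [h1, h2, hamming_append _ _ (by simp), hamming_append _ _ (by simp),
    hamming_append _ _ (by simp), hamming_self, hamming_self]
  decide

lemma wrap_ham (k m : ℕ) :
    hamming (lb k (m+1)) (fb (k+1) (m+1)) = 2 := by
  have h1 : lb k (m+1) =
      List.replicate k true ++ ([false] ++ (List.replicate m false ++ [true])) := by
    simp [lb, List.replicate_succ, List.append_assoc]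
  have h2 : fb (k+1) (m+1) =
      List.replicate k true ++ ([true] ++ (List.replicate m false ++ [false])) := by
    simp [fb, List.replicate_succ', List.append_assoc]
  rw [h1, h2, hamming_append _ _ (by simp), hamming_append _ _ (by simp),
    hamming_append _ _ (by simp), hamming_self, hamming_self]
  decide

lemma chain_gl (n : ℕ) : ∀ k, List.IsChain
    (fun x y => x.length = n ∧ y.length = n ∧ hamming x y = 2) (grayLevel n k) := by
  induction n with
  | zero =>
    intro k
    cases k with
    | zero => simp [grayLevel, gray]
    | succ k => rw [grayLevel_eq_nil (Nat.succ_pos k)]; simp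
  | succ n ih =>
    intro k
    cases k with
    | zero =>
      rw [grayLevel_succ_zero, List.isChain_map]
      refine (ih 0).imp ?_
      rintro x y ⟨hx, hy, hxy⟩
      exact ⟨by simp [hx], by simp [hy],
        by rw [hamming_snoc_same _ _ _ (hx.trans hy.symm)]; exact hxy⟩
    | succ k =>
      rw [grayLevel_succ_succ, List.isChain_append]
      obtain ⟨ihH, ihL0, ihLS⟩ := gl_ends n
      refine ⟨?_, ?_, ?_⟩
      · rw [List.isChain_map]
        refine (ih (k+1)).imp ?_
        rintro x y ⟨hx, hy, hxy⟩
        exact ⟨by simp [hx], by simp [hy],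
          by rw [hamming_snoc_same _ _ _ (hx.trans hy.symm)]; exact hxy⟩
      · rw [List.isChain_map, List.isChain_reverse]
        refine (ih k).imp ?_
        rintro x y ⟨hx, hy, hxy⟩
        refine ⟨by simp [hy], by simp [hx], ?_⟩
        rw [hamming_snoc_same _ _ _ (hy.trans hx.symm), hamming_comm]
        exact hxy
      · intro x hx y hy
        rcases Nat.lt_or_ge n (k+1) with h | h
        · rw [grayLevel_eq_nil h] at hx
          simp at hx
        · rw [List.getLast?_map, ihLS k h] at hx
          simp only [Option.map_some, Option.mem_def, Option.some.injEq] at hx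
          subst hx
          rw [List.head?_map, List.head?_reverse] at hy
          have hlen : (lb k (n - k - 1)).length = n := by rw [length_lb]; omega
          cases k with
          | zero =>
            rw [ihL0] at hy
            simp only [Option.map_some, Option.mem_def, Option.some.injEq] at hy
            subst hy
            obtain ⟨m, rfl⟩ : ∃ m, n = m + 1 := ⟨n - 1, by omega⟩
            have e : m + 1 - 0 - 1 = m := by omega
            rw [e] at hlen ⊢
            exact ⟨by simp [hlen], by simp, junction1 m⟩
          | succ m =>
            rw [ihLS m (by omega)] at hy
            simp only [Option.map_some, Option.mem_def, Option.some.injEq] at hy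
            subst hy
            refine ⟨by simp [hlen], by simp [length_lb]; omega, ?_⟩
            have e : n - m - 1 = (n - (m+1) - 1) + 1 := by omega
            rw [e]
            exact junction2 m (n - (m+1) - 1)

lemma getLast?_lb (k m : ℕ) : (lb k m).getLast? = some true := by
  rw [lb, List.getLast?_concat]

lemma getLast?_fb (k m : ℕ) : (fb k (m+1)).getLast? = some false := by
  rw [fb, List.replicate_succ', ← List.append_assoc, List.getLast?_concat]

lemma two_le_length {l : List (List Bool)} {a b : List Bool}
    (ha : l.head? = some a) (hb : l.getLast? = some b) (hab : a ≠ b) : 2 ≤ l.length := by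
  match l with
  | [] => simp at ha
  | [x] =>
    simp only [List.head?_cons, Option.some.injEq] at ha
    simp only [List.getLast?_singleton, Option.some.injEq] at hb
    exact absurd (ha.symm.trans hb) hab
  | x :: y :: t => simp only [List.length_cons]; omega


/-- For `n ≥ 2` and `0 < k < n`, any two cyclically consecutive bitstrings in `Γ_{n,k}`
differ in exactly two positions. -/
theorem stmt4 (n k : ℕ) (hn : 2 ≤ n) (hk0 : 0 < k) (hkn : k < n)
    (i j : Fin (grayLevel n k).length)
    (hij : (j : ℕ) = ((i : ℕ) + 1) % (grayLevel n k).length) :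
    hamming ((grayLevel n k).get i) ((grayLevel n k).get j) = 2 := by
  obtain ⟨ihH, ihL0, ihLS⟩ := gl_ends n
  obtain ⟨k', rfl⟩ : ∃ k', k = k' + 1 := ⟨k - 1, by omega⟩
  obtain ⟨m, hm⟩ : ∃ m, n - (k' + 1) = m + 1 := ⟨n - (k'+1) - 1, by omega⟩
  have hhead : (grayLevel n (k'+1)).head? = some (fb (k'+1) (m+1)) := by
    rw [ihH (k'+1) (by omega), hm]
  have hlast : (grayLevel n (k'+1)).getLast? = some (lb k' (m+1)) := by
    have e : n - k' - 1 = m + 1 := by omega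
    rw [ihLS k' (by omega), e]
  have hab : lb k' (m+1) ≠ fb (k'+1) (m+1) := by
    intro h
    have := (getLast?_lb k' (m+1)).symm.trans (by rw [h, getLast?_fb])
    simp at this
  have hlen : 2 ≤ (grayLevel n (k'+1)).length := two_le_length hhead hlast (Ne.symm hab)
  have hne : grayLevel n (k'+1) ≠ [] := by
    intro h; rw [h] at hhead; simp at hhead
  rcases Nat.lt_or_ge ((i : ℕ) + 1) (grayLevel n (k'+1)).length with h | h
  · have hj : j = ⟨(i : ℕ) + 1, h⟩ := Fin.ext (by rw [hij, Nat.mod_eq_of_lt h])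
    rw [hj]
    have := (List.isChain_iff_getElem.mp (chain_gl n (k'+1)) i (by omega)).2.2
    exact this
  · have hi1 : (i : ℕ) + 1 = (grayLevel n (k'+1)).length := by
      have := i.isLt; omega
    have hj : (j : ℕ) = 0 := by rw [hij, hi1, Nat.mod_self]
    have hgi : (grayLevel n (k'+1)).get i = lb k' (m+1) := by
      rw [List.getLast?_eq_getLast hne, Option.some.injEq] at hlast
      rw [← hlast, show (grayLevel n (k'+1)).getLast hne = (grayLevel n (k'+1)).get ⟨(grayLevel n (k'+1)).length - 1, by omega⟩ from List.getLast_eq_getElem hne]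
      congr 1
      exact Fin.ext (by simp; omega)
    have hgj : (grayLevel n (k'+1)).get j = fb (k'+1) (m+1) := by
      rw [List.head?_eq_head hne, Option.some.injEq] at hhead
      rw [← hhead]
      have : j = ⟨0, by omega⟩ := Fin.ext hj
      rw [this, List.get_mk_zero]
    rw [hgi, hgj]
    exact wrap_ham k' m
end

section
/- A bitstring x = (x_1,...,x_n) of weight k, different from 0^{n−1}1, is an upward vertex of the reflected Gray code Γ_n (i.e., its successor in Γ_n has weight k+1) if and only if k is even and x_1 = 0, or k is odd and x_{i+1} = 0, where i is the smallest index with x_i = 1. -/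
namespace GrayAux

/-- The flip position of the Gray-code successor of `x`. -/
def f (x : List Bool) : ℕ :=
  if Even (x.count true) then 0 else x.idxOf true + 1

/-- `y` is the Gray successor of `x` (in `Γ_n`). -/
lemma f_def (x : List Bool) :
    f x = if Even (x.count true) then 0 else x.idxOf true + 1 := rfl

def Rel (n : ℕ) (x y : List Bool) : Prop :=
  x.length = n ∧ f x < n ∧ y = x.set (f x) (!x.getD (f x) false)

lemma gray_length (n : ℕ) : (gray n).length = 2 ^ n := by
  induction n with
  | zero => rfl
  | succ n ih => simp [gray, ih, pow_succ]; ring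

lemma length_of_mem_gray : ∀ n, ∀ x ∈ gray n, x.length = n := by
  intro n
  induction n with
  | zero => intro x hx; simp [gray] at hx; simp [hx]
  | succ n ih =>
    intro x hx
    simp only [gray, List.mem_append, List.mem_map, List.mem_reverse] at hx
    rcases hx with ⟨y, hy, rfl⟩ | ⟨y, hy, rfl⟩ <;> simp [ih y hy]

lemma gray_head? (n : ℕ) : (gray n).head? = some (List.replicate n false) := by
  induction n with
  | zero => rfl
  | succ n ih =>
    rw [gray, List.head?_append, List.head?_map, ih]
    simp [List.replicate_succ']

lemma gray_getLast? (n : ℕ) :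
    (gray (n + 1)).getLast? = some (List.replicate n false ++ [true]) := by
  rw [gray, List.getLast?_append, List.getLast?_map, List.getLast?_reverse, gray_head?]
  simp

lemma set_getElem_self (l : List Bool) (p : ℕ) (hp : p < l.length) : l.set p l[p] = l := by
  apply List.ext_getElem (by simp)
  intro i h1 h2
  rw [List.getElem_set]
  split
  · subst ‹p = i›; rfl
  · rfl

lemma count_set (x : List Bool) (p : ℕ) (hp : p < x.length) (b : Bool) :
    (x.set p b).count true + (if x[p] then 1 else 0)
      = x.count true + (if b then 1 else 0) := by
  conv_rhs => rw [← List.take_append_drop p x, ← List.getElem_cons_drop hp]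
  rw [List.set_eq_take_append_cons_drop, if_pos hp]
  simp only [List.count_append, List.count_cons]
  cases b <;> cases h' : x[p] <;> simp <;> omega

lemma indexOf_eq_of_getElem (l : List Bool) :
    ∀ k : ℕ, ∀ hk : k < l.length, (∀ q (hq : q < k), l[q] = false) → l[k] = true →
      l.idxOf true = k := by
  induction l with
  | nil => intro k hk; simp at hk
  | cons b t ih =>
    intro k hk hfalse htrue
    cases k with
    | zero =>
      simp at htrue
      simp [htrue, List.idxOf_cons]
    | succ k =>
      have hb : b = false := hfalse 0 (Nat.succ_pos _)
      subst hb
      have := ih k (by simpa using hk) (fun q hq => hfalse (q + 1) (by omega)) (by simpa using htrue)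
      simp [List.idxOf_cons, this]

lemma getElem_eq_false_of_lt_indexOf (l : List Bool) :
    ∀ q : ℕ, q < l.idxOf true → ∀ hq : q < l.length, l[q] = false := by
  induction l with
  | nil => intro q _ hq; simp at hq
  | cons b t ih =>
    intro q hq hql
    rw [List.idxOf_cons] at hq
    cases b
    · simp only [show (false == true) = false from rfl, cond_false] at hq
      cases q with
      | zero => rfl
      | succ q => exact ih q (by omega) (by simpa using hql)
    · simp only [show (true == true) = true from rfl, cond_true] at hq
      omega

lemma true_mem_of_odd {x : List Bool} (h : Odd (x.count true)) : true ∈ x := by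
  rw [← List.count_pos_iff]
  rcases Nat.eq_zero_or_pos (x.count true) with h0 | h0
  · rw [h0] at h; simp at h
  · exact h0

lemma f_append_false (x : List Bool) : f (x ++ [false]) = f x := by
  unfold f
  have hc : (x ++ [false]).count true = x.count true := by simp [List.count_append]
  rw [hc]
  split
  · rfl
  · rw [List.idxOf_append_of_mem (true_mem_of_odd (Nat.not_even_iff_odd.1 ‹_›))]

lemma relA {n : ℕ} {x y : List Bool} (h : Rel n x y) :
    Rel (n + 1) (x ++ [false]) (y ++ [false]) := by
  obtain ⟨hlen, hf, hset⟩ := h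
  have hfx := f_append_false x
  have hflt : f x < x.length := hlen ▸ hf
  refine ⟨by simp [hlen], by omega, ?_⟩
  rw [hfx]
  have hgd : (x ++ [false]).getD (f x) false = x.getD (f x) false := by
    rw [List.getD_eq_getElem _ _ (by simp; omega), List.getD_eq_getElem _ _ hflt,
      List.getElem_append_left hflt]
  rw [hgd, List.set_append, if_pos hflt, hset]

lemma relB {n : ℕ} {v u : List Bool} (h : Rel n v u) :
    Rel (n + 1) (u ++ [true]) (v ++ [true]) := by
  obtain ⟨hlen, hf, hset⟩ := h
  have hflt : f v < v.length := hlen ▸ hf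
  have hgd : v.getD (f v) false = v[f v] := List.getD_eq_getElem _ _ hflt
  rw [hgd] at hset
  subst hset
  have hcount := count_set v (f v) hflt (!v[f v])
  have hcount' : (v[f v] = false → (v.set (f v) (!v[f v])).count true = v.count true + 1) ∧
      (v[f v] = true → (v.set (f v) (!v[f v])).count true + 1 = v.count true) := by
    cases hb : v[f v] <;> rw [hb] at hcount <;>
        simp only [Bool.not_false, Bool.not_true] at hcount <;> simp at hcount <;>
      simp [hcount]
  have hparity : ((v.set (f v) (!v[f v])).count true + 1) % 2 = v.count true % 2 := by
    cases hb : v[f v]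
    · have := hcount'.1 hb; rw [hb] at this; omega
    · have := hcount'.2 hb; rw [hb] at this; omega
  have hcapp : ((v.set (f v) (!v[f v])) ++ [true]).count true
      = (v.set (f v) (!v[f v])).count true + 1 := by simp [List.count_append]
  have hfu : f ((v.set (f v) (!v[f v])) ++ [true]) = f v := by
    by_cases hev : Even (v.count true)
    · have h1 : f v = 0 := by rw [f_def v, if_pos hev]
      have h2 : f ((v.set (f v) (!v[f v])) ++ [true]) = 0 := by
        rw [f_def ((v.set (f v) (!v[f v])) ++ [true]),
          if_pos (by rw [Nat.even_iff] at hev ⊢; rw [hcapp]; omega)]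
      rw [h2, h1]
    · have hodd : Odd (v.count true) := Nat.not_even_iff_odd.1 hev
      have hmem : true ∈ v := true_mem_of_odd hodd
      have hiv : List.idxOf true v < v.length := List.idxOf_lt_length_iff.2 hmem
      have hfv : f v = List.idxOf true v + 1 := by rw [f_def v, if_neg hev]
      have hvi : v[List.idxOf true v] = true := List.getElem_idxOf hiv
      have hidxu : ((v.set (f v) (!v[f v])) ++ [true]).idxOf true = List.idxOf true v := by
        apply indexOf_eq_of_getElem _ (List.idxOf true v)
          (by simp [List.length_set]; omega)
        · intro q hq
          rw [List.getElem_append_left (by simp [List.length_set]; omega),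
            List.getElem_set_ne (by omega)]
          exact getElem_eq_false_of_lt_indexOf v q (by omega) (by omega)
        · rw [List.getElem_append_left (by simp [List.length_set]; omega),
            List.getElem_set_ne (by omega)]
          exact hvi
      have h2 : f ((v.set (f v) (!v[f v])) ++ [true]) = List.idxOf true v + 1 := by
        rw [f_def ((v.set (f v) (!v[f v])) ++ [true]),
          if_neg (by rw [Nat.even_iff] at hev ⊢; rw [hcapp]; omega), hidxu]
      rw [h2, hfv]
  refine ⟨by simp [hlen], by omega, ?_⟩
  rw [hfu]
  have hgdu : ((v.set (f v) (!v[f v])) ++ [true]).getD (f v) false = !v[f v] := by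
    rw [List.getD_eq_getElem _ _ (by simp [List.length_set]; omega),
      List.getElem_append_left (by simp [List.length_set]; omega)]
    exact List.getElem_set_self (by simp [List.length_set]; omega)
  rw [hgdu, Bool.not_not, List.set_append, if_pos (by simp [List.length_set]; omega),
    List.set_set, set_getElem_self]

lemma relMid (m : ℕ) :
    Rel (m + 2) (List.replicate m false ++ [true] ++ [false])
      (List.replicate m false ++ [true] ++ [true]) := by
  have hc : (List.replicate m false ++ [true] ++ [false]).count true = 1 := by
    simp [List.count_append, List.count_replicate]
  have hidx : (List.replicate m false ++ [true] ++ [false]).idxOf true = m := by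
    rw [List.append_assoc, List.idxOf_append_of_notMem (by simp)]
    simp [List.idxOf_cons]
  have hfx : f (List.replicate m false ++ [true] ++ [false]) = m + 1 := by
    unfold f
    rw [hc, if_neg (by simp), hidx]
  refine ⟨by simp, by omega, ?_⟩
  rw [hfx]
  have hlen : (List.replicate m false ++ [true]).length = m + 1 := by simp
  have hgd : (List.replicate m false ++ [true] ++ [false]).getD (m + 1) false = false := by
    rw [List.getD_eq_getElem _ _ (by simp)]
    rw [List.getElem_append_right (by omega)]
    simp [hlen]
  rw [hgd, List.set_append, if_neg (by omega), hlen]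
  simp

lemma gray_chain (n : ℕ) : List.IsChain (Rel n) (gray n) := by
  induction n with
  | zero => exact List.isChain_singleton _
  | succ n ih =>
    rw [gray]
    refine List.isChain_append.2 ⟨?_, ?_, ?_⟩
    · exact (List.isChain_map _).2 (ih.imp fun a b h => relA h)
    · refine (List.isChain_map _).2 (List.isChain_reverse.2 (ih.imp fun a b h => ?_))
      exact relB h
    · intro xx hxx yy hyy
      rw [List.getLast?_map] at hxx
      rw [List.head?_map, List.head?_reverse] at hyy
      cases n with
      | zero =>
        simp only [gray, List.getLast?_singleton, Option.map_some, Option.mem_some_iff,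
          List.nil_append] at hxx hyy
        subst hxx; subst hyy
        exact ⟨rfl, Nat.zero_lt_one, rfl⟩
      | succ m =>
        rw [gray_getLast?] at hxx hyy
        simp only [Option.map_some, Option.mem_some_iff] at hxx hyy
        subst hxx; subst hyy
        exact relMid m

end GrayAux

/-- Characterization of upward vertices of `Γ_n`: a bitstring `x` of weight `k`, different
from `0^{n-1}1`, has its cyclic successor in `Γ_n` at weight `k+1` iff `k` is even and
`x_1 = 0`, or `k` is odd and `x_{i+1} = 0`, where `i` is the smallest (1-based) index
with `x_i = 1`. -/
theorem stmt7 (n : ℕ) (hn : 1 ≤ n) (i j : Fin (gray n).length)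
    (hij : (j : ℕ) = ((i : ℕ) + 1) % (gray n).length)
    (x : List Bool) (hx : x = (gray n).get i)
    (hlast : x ≠ List.replicate (n - 1) false ++ [true]) :
    ((gray n).get j).count true = x.count true + 1 ↔
      (Even (x.count true) ∧ x.getD 0 false = false) ∨
      (Odd (x.count true) ∧ x.getD (x.idxOf true + 1) false = false) := by
  have hi : (i : ℕ) < (gray n).length := i.isLt
  by_cases hm : (i : ℕ) + 1 < (gray n).length
  · -- non-wrapping case
    have hj : (j : ℕ) = (i : ℕ) + 1 := by rw [hij, Nat.mod_eq_of_lt hm]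
    have hrel : GrayAux.Rel n ((gray n).get i) ((gray n).get j) := by
      have h := (List.isChain_iff_getElem.1 (GrayAux.gray_chain n)) i (by omega)
      have hieq : i = (⟨(i : ℕ), by omega⟩ : Fin (gray n).length) := by
        apply Fin.ext; rfl
      have hjeq : j = (⟨(i : ℕ) + 1, by omega⟩ : Fin (gray n).length) := by
        apply Fin.ext; exact hj
      rw [hieq, hjeq]
      exact h
    rw [← hx] at hrel
    obtain ⟨hlen, hf, hset⟩ := hrel
    have hflt : GrayAux.f x < x.length := hlen ▸ hf
    have hgd : x.getD (GrayAux.f x) false = x[GrayAux.f x] := List.getD_eq_getElem _ _ hflt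
    rw [hgd] at hset
    rw [hset]
    have hcount := GrayAux.count_set x (GrayAux.f x) hflt (!x[GrayAux.f x])
    have hLHS : (x.set (GrayAux.f x) (!x[GrayAux.f x])).count true = x.count true + 1 ↔
        x[GrayAux.f x] = false := by
      cases hb : x[GrayAux.f x] <;> rw [hb] at hcount <;>
        simp only [Bool.not_false, Bool.not_true] at hcount ⊢ <;> simp at hcount
      · simp [hcount]
      · simp only [Bool.true_eq_false, iff_false]
        omega
    have hRHS : ((Even (x.count true) ∧ x.getD 0 false = false) ∨
        (Odd (x.count true) ∧ x.getD (x.idxOf true + 1) false = false)) ↔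
        x.getD (GrayAux.f x) false = false := by
      rw [GrayAux.f_def x]
      by_cases hev : Even (x.count true)
      · rw [if_pos hev]
        have hno : ¬ Odd (x.count true) := fun h => (Nat.not_even_iff_odd.2 h) hev
        constructor
        · rintro (⟨-, h⟩ | ⟨h, -⟩)
          · exact h
          · exact absurd h hno
        · intro h
          exact Or.inl ⟨hev, h⟩
      · rw [if_neg hev]
        have ho : Odd (x.count true) := Nat.not_even_iff_odd.1 hev
        constructor
        · rintro (⟨h, -⟩ | ⟨-, h⟩)
          · exact absurd h hev
          · exact h
        · intro h
          exact Or.inr ⟨ho, h⟩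
    rw [hLHS, ← hgd]
    exact hRHS.symm
  · -- wrapping case: x is the last element, contradicting hlast
    exfalso
    apply hlast
    have hieq : (i : ℕ) = (gray n).length - 1 := by omega
    obtain ⟨m, rfl⟩ : ∃ m, n = m + 1 := ⟨n - 1, by omega⟩
    have hgl := GrayAux.gray_getLast? m
    rw [List.getLast?_eq_getElem?] at hgl
    have h1 : (gray (m + 1))[(i : ℕ)]? = some (List.replicate m false ++ [true]) := by
      rw [hieq]; exact hgl
    rw [List.getElem?_eq_getElem hi] at h1
    rw [hx]
    simp only [List.get_eq_getElem]
    rw [Option.some.inj h1]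
    simp
end

section
/- For any k ≥ 1 and 1 ≤ c ≤ k, the fraction of vertices of Q_{2k+1,[k−c,k+1+c]} missed by the trimmed reflected Gray code cycle is at most 1/(2(c+1)); concretely, 2·C(2k, k+c+1) ≤ v/(2(c+1)) where v = 2·∑_{i=k+1}^{k+c+1} C(2k+1, i). -/
/-- `choose n` is monotone on the lower half. -/
lemma aux_mono (n r s : ℕ) (hrs : r ≤ s) (hs : s ≤ n / 2) :
    n.choose r ≤ n.choose s := by
  induction s, hrs using Nat.le_induction with
  | base => exact le_rfl
  | succ s hs' ih =>
      exact (ih (by omega)).trans (Nat.choose_le_succ_of_lt_half_left (by omega))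

/-- `choose n` is antitone on the upper half. -/
lemma aux_anti (n a b : ℕ) (hab : a ≤ b) (ha : n - n / 2 ≤ a) :
    n.choose b ≤ n.choose a := by
  by_cases hb : b ≤ n
  · rw [← Nat.choose_symm hb, ← Nat.choose_symm (hab.trans hb)]
    exact aux_mono n (n - b) (n - a) (by omega) (by omega)
  · rw [Nat.choose_eq_zero_of_lt (by omega)]
    exact Nat.zero_le _

/-- The number of vertices missed by the trimmed reflected Gray code in
`Q_{2k+1,[k-c,k+1+c]}`, namely `2·C(2k,k+c+1)`, is at most a `1/(2(c+1))`-fraction of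
the total number `v = 2·∑_{i=k+1}^{k+c+1} C(2k+1,i)` of vertices. -/
theorem stmt16 (k c : ℕ) (hk : 1 ≤ k) (hc1 : 1 ≤ c) (hck : c ≤ k) :
    (2 * ((2 * k).choose (k + c + 1)) : ℝ) ≤
      (2 * ∑ i ∈ Finset.Icc (k + 1) (k + c + 1), ((2 * k + 1).choose i) : ℝ)
        / (2 * (c + 1)) := by
  have h1 : 2 * (2 * k).choose (k + c + 1) ≤ (2 * k + 1).choose (k + c + 1) := by
    have hsplit : (2 * k + 1).choose (k + c + 1)
        = (2 * k).choose (k + c) + (2 * k).choose (k + c + 1) :=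
      Nat.choose_succ_succ (2 * k) (k + c)
    have hmono : (2 * k).choose (k + c + 1) ≤ (2 * k).choose (k + c) :=
      aux_anti (2 * k) (k + c) (k + c + 1) (by omega) (by omega)
    omega
  have h2 : ∀ i ∈ Finset.Icc (k + 1) (k + c + 1),
      (2 * k + 1).choose (k + c + 1) ≤ (2 * k + 1).choose i := by
    intro i hi
    rw [Finset.mem_Icc] at hi
    exact aux_anti (2 * k + 1) i (k + c + 1) hi.2 (by omega)
  have h3 : (c + 1) * (2 * k + 1).choose (k + c + 1)
      ≤ ∑ i ∈ Finset.Icc (k + 1) (k + c + 1), (2 * k + 1).choose i := by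
    have := Finset.card_nsmul_le_sum (Finset.Icc (k + 1) (k + c + 1))
      (fun i => (2 * k + 1).choose i) ((2 * k + 1).choose (k + c + 1)) h2
    rw [Nat.card_Icc, smul_eq_mul] at this
    have heq : k + c + 1 + 1 - (k + 1) = c + 1 := by omega
    rwa [heq] at this
  have key : (c + 1) * (2 * (2 * k).choose (k + c + 1))
      ≤ ∑ i ∈ Finset.Icc (k + 1) (k + c + 1), (2 * k + 1).choose i :=
    le_trans (Nat.mul_le_mul_left _ h1) h3
  have hpos : (0 : ℝ) < 2 * (c + 1) := by positivity
  rw [le_div_iff₀ hpos]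
  have keyR : ((c : ℝ) + 1) * (2 * (2 * k).choose (k + c + 1))
      ≤ ∑ i ∈ Finset.Icc (k + 1) (k + c + 1), ((2 * k + 1).choose i : ℝ) := by
    exact_mod_cast key
  push_cast
  nlinarith [keyR]
end
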